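/- Let V be a compact metric space and g : V → V a surjective map. For N ≥ 0 define V(N,g) := { (v₀, v₁, …, v_N) ∈ V^{N+1} : g(v_i) = v_{i-1} for all 1 ≤ i ≤ N } with the projection π₀^N(v₀,…,v_N) = v₀. Then g is a local homeomorphism if and only if for each N ≥ 0 the projection π₀^N : V(N,g) → V is a finite-to-one covering map. -/

import Mathlib

open Set Topology Function

section CoveringAux

variable {E X : Type*} [TopologicalSpace E] [TopologicalSpace X]

/-- Fibers of a local homeomorphism are discrete. -/
theorem IsLocalHomeomorph.discrete_fiber {f : E → X} (hf : IsLocalHomeomorph f) (x : X) :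
    DiscreteTopology (f ⁻¹' {x} : Set E) := by
  rw [discreteTopology_iff_isOpen_singleton]
  rintro ⟨e, he⟩
  obtain ⟨φ, heφ, rfl⟩ := hf e
  have hkey : ({⟨e, he⟩} : Set ((φ : E → X) ⁻¹' {x})) = Subtype.val ⁻¹' φ.source := by
    ext ⟨e', he'⟩
    simp only [mem_singleton_iff, mem_preimage, Subtype.mk.injEq]
    constructor
    · rintro rfl; exact heφ
    · intro hsrc
      exact φ.injOn hsrc heφ (by
        have h1 : (φ : E → X) e' = x := he'
        have h2 : (φ : E → X) e = x := he
        rw [h1, h2])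
  rw [hkey]
  exact φ.open_source.preimage continuous_subtype_val

set_option maxHeartbeats 1000000 in
/-- A surjective local homeomorphism from a compact Hausdorff space to a Hausdorff
space is a covering map. -/
theorem isCoveringMap_of_isLocalHomeomorph [CompactSpace E] [T2Space E] [T2Space X]
    {f : E → X} (hf : IsLocalHomeomorph f) (hsurj : Function.Surjective f) :
    IsCoveringMap f := by
  classical
  have hfc : Continuous f := hf.continuous
  have hfo : IsOpenMap f := hf.isOpenMap
  intro x
  have hdisc : DiscreteTopology (f ⁻¹' {x} : Set E) := hf.discrete_fiber x
  have hfibclosed : IsClosed (f ⁻¹' {x}) := isClosed_singleton.preimage hfc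
  have hfibfin : (f ⁻¹' {x}).Finite := hfibclosed.isCompact.finite (isDiscrete_iff_discreteTopology.mpr hdisc)
  haveI hFin : Finite (f ⁻¹' {x} : Set E) := hfibfin.to_subtype
  obtain ⟨w, hw⟩ := hsurj x
  haveI hne : Nonempty (f ⁻¹' {x} : Set E) := ⟨⟨w, hw⟩⟩
  choose φ hmem hfeq using fun e => hf e
  obtain ⟨U, hU, hUdisj⟩ := hfibfin.t2_separation
  set S : E → Set E := fun e => U e ∩ (φ e).source with hSdef
  have hSopen : ∀ e, IsOpen (S e) := fun e => (hU e).2.inter (φ e).open_source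
  have hmemS : ∀ e, e ∈ S e := fun e => ⟨(hU e).1, hmem e⟩
  set K : Set E := ⋃ e : (f ⁻¹' {x} : Set E), S e.1 with hKdef
  have hKopen : IsOpen K := isOpen_iUnion fun e => hSopen e.1
  have himgcl : IsClosed (f '' Kᶜ) :=
    (hKopen.isClosed_compl.isCompact.image hfc).isClosed
  set W : Set X := (⋂ e : (f ⁻¹' {x} : Set E), f '' S e.1) \ f '' Kᶜ with hWdef
  have hWopen : IsOpen W :=
    (isOpen_iInter_of_finite fun e : (f ⁻¹' {x} : Set E) => hfo _ (hSopen e.1)).sdiff himgcl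
  have hxW : x ∈ W := by
    constructor
    · exact mem_iInter.mpr fun e => ⟨e.1, hmemS e.1, e.2⟩
    · rintro ⟨p, hp, hpx⟩
      exact hp (mem_iUnion.mpr ⟨⟨p, hpx⟩, hmemS p⟩)
  have hinjS : ∀ e : E, Set.InjOn f (S e) := fun e => by
    rw [hfeq e]; exact (φ e).injOn.mono inter_subset_right
  have hWsub : ∀ e : (f ⁻¹' {x} : Set E), W ⊆ f '' S e.1 := fun e w hw =>
    mem_iInter.mp hw.1 e
  have hpreK : ∀ p : E, f p ∈ W → p ∈ K := by
    intro p hp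
    by_contra hpK
    exact hp.2 ⟨p, hpK, rfl⟩
  have hex : ∀ p : E, f p ∈ W → ∃ e : (f ⁻¹' {x} : Set E), p ∈ S e.1 := fun p hp =>
    mem_iUnion.mp (hpreK p hp)
  set σ : E → (f ⁻¹' {x} : Set E) := fun p =>
    if h : ∃ e : (f ⁻¹' {x} : Set E), p ∈ S e.1 then h.choose else Classical.arbitrary _
    with hσdef
  have hσ : ∀ (p : E) (e : (f ⁻¹' {x} : Set E)), p ∈ S e.1 → σ p = e := by
    intro p e hpe
    have h : ∃ e : (f ⁻¹' {x} : Set E), p ∈ S e.1 := ⟨e, hpe⟩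
    have hc := h.choose_spec
    have heq : h.choose = e := by
      by_contra hnee
      have hne' : (h.choose : E) ≠ e.1 := fun hh => hnee (Subtype.ext hh)
      exact (Set.disjoint_left.mp (hUdisj h.choose.2 e.2 hne') hc.1) hpe.1
    simp only [hσdef, dif_pos h, heq]
  have hinv : ∀ (e : (f ⁻¹' {x} : Set E)) (w : X), w ∈ W →
      (φ e.1).symm w ∈ S e.1 ∧ f ((φ e.1).symm w) = w := by
    intro e w hw
    obtain ⟨u, hu, hfu⟩ := hWsub e hw
    have hueq : (φ e.1).symm w = u := by
      have hwφ : w = (φ e.1) u := by rw [← hfu]; exact congrFun (hfeq e.1) u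
      rw [hwφ]
      exact (φ e.1).left_inv hu.2
    rw [hueq]
    exact ⟨hu, hfu⟩
  set T : Bundle.Trivialization (f ⁻¹' {x} : Set E) f :=
    { toFun := fun p => (f p, σ p)
      invFun := fun q => (φ (q.2 : (f ⁻¹' {x} : Set E)).1).symm q.1
      source := f ⁻¹' W
      target := W ×ˢ (univ : Set (f ⁻¹' {x} : Set E))
      map_source' := fun p hp => ⟨hp, mem_univ _⟩
      map_target' := fun q hq => by
        have h2 := (hinv q.2 q.1 hq.1).2
        show f _ ∈ W
        rw [h2]
        exact hq.1
      left_inv' := fun p hp => by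
        obtain ⟨e, hpe⟩ := hex p hp
        show (φ ((σ p : (f ⁻¹' {x} : Set E)) : E)).symm (f p) = p
        rw [hσ p e hpe]
        have hfp : f p = (φ e.1) p := congrFun (hfeq e.1) p
        rw [hfp]
        exact (φ e.1).left_inv hpe.2
      right_inv' := fun q hq => by
        obtain ⟨h1, h2⟩ := hinv q.2 q.1 hq.1
        exact Prod.ext h2 (hσ _ _ h1)
      open_source := hWopen.preimage hfc
      open_target := hWopen.prod isOpen_univ
      continuousOn_toFun := by
        intro p hp
        have hp' : f p ∈ W := hp
        obtain ⟨e, hpe⟩ := hex p hp'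
        have hev : (fun p' => σ p') =ᶠ[𝓝 p] (fun _ => e) := by
          filter_upwards [(hSopen e.1).mem_nhds hpe] with p' hp' using hσ p' e hp'
        have hσc : ContinuousAt σ p := (continuousAt_congr hev).mpr continuousAt_const
        exact ((hfc.continuousAt).prodMk hσc).continuousWithinAt
      continuousOn_invFun := by
        intro q hq
        have hq1 : q.1 ∈ W := hq.1
        set e : (f ⁻¹' {x} : Set E) := q.2 with hedef
        have hWtgt : W ⊆ (φ e.1).target := by
          intro w hw
          obtain ⟨u, hu, hfu⟩ := hWsub e hw
          have hwφ : w = (φ e.1) u := by rw [← hfu]; exact congrFun (hfeq e.1) u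
          rw [hwφ]
          exact (φ e.1).map_source hu.2
        have hc1 : ContinuousAt (φ e.1).symm q.1 :=
          (φ e.1).continuousOn_symm.continuousAt
            ((φ e.1).open_target.mem_nhds (hWtgt hq1))
        have hc : ContinuousAt (fun q' : X × (f ⁻¹' {x} : Set E) => (φ e.1).symm q'.1) q :=
          hc1.comp continuousAt_fst
        have hev : (fun q' : X × (f ⁻¹' {x} : Set E) => (φ (q'.2 : (f ⁻¹' {x} : Set E)).1).symm q'.1)
            =ᶠ[𝓝 q] (fun q' : X × (f ⁻¹' {x} : Set E) => (φ e.1).symm q'.1) := by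
          have hs : (Prod.snd ⁻¹' {e} : Set (X × (f ⁻¹' {x} : Set E))) ∈ 𝓝 q :=
            ((isOpen_discrete ({e} : Set (f ⁻¹' {x} : Set E))).preimage continuous_snd).mem_nhds
              rfl
          filter_upwards [hs] with q' hq'
          have : q'.2 = e := hq'
          rw [this]
        exact ((continuousAt_congr hev).mpr hc).continuousWithinAt
      baseSet := W
      open_baseSet := hWopen
      source_eq := rfl
      target_eq := rfl
      proj_toFun := fun p _ => rfl }
  exact IsEvenlyCovered.of_trivialization (t := T) hxW

/-- The total space of a finite-to-one covering of a compact Hausdorff space is compact. -/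
theorem compactSpace_of_isCoveringMap [CompactSpace X] [T2Space X]
    {f : E → X} (hf : IsCoveringMap f) (hfin : ∀ x : X, (f ⁻¹' {x}).Finite) :
    CompactSpace E := by
  have key : ∀ x : X, ∃ K : Set X, x ∈ interior K ∧ IsCompact (f ⁻¹' K) := by
    intro x
    by_cases hne : (f ⁻¹' {x}).Nonempty
    swap
    · obtain ⟨hd, U, hxU, hU, hfU, H, hH⟩ := hf x
      refine ⟨U, by rwa [hU.interior_eq], ?_⟩
      have : f ⁻¹' U = ∅ := subset_empty_iff.mp fun e he => (hne ⟨_, (H ⟨e, he⟩).2.2⟩).elim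
      rw [this]; exact isCompact_empty
    haveI := hne.to_subtype
    have hxt := (hf x).mem_toTrivialization_baseSet
    set t := (hf x).toTrivialization with ht
    obtain ⟨K, hKcpt, hxK, hKsub⟩ := exists_compact_subset t.open_baseSet hxt
    refine ⟨K, hxK, ?_⟩
    haveI : Finite (f ⁻¹' {x} : Set E) := (hfin x).to_subtype
    have himg : f ⁻¹' K = t.toOpenPartialHomeomorph.symm '' (K ×ˢ (univ : Set (f ⁻¹' {x} : Set E))) := by
      apply Set.eq_of_subset_of_subset
      · intro p hp
        have hpsrc : p ∈ t.source := t.mem_source.mpr (hKsub hp)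
        refine ⟨t p, ⟨?_, mem_univ _⟩, t.toOpenPartialHomeomorph.left_inv hpsrc⟩
        rw [t.coe_fst hpsrc]; exact hp
      · rintro q ⟨y, hy, rfl⟩
        have hytgt : y ∈ t.target := by
          rw [t.target_eq]
          exact ⟨hKsub hy.1, mem_univ _⟩
        show f (t.toOpenPartialHomeomorph.symm y) ∈ K
        rw [t.proj_symm_apply hytgt]
        exact hy.1
    rw [himg]
    have hsub : K ×ˢ (univ : Set (f ⁻¹' {x} : Set E)) ⊆ t.target := by
      rw [t.target_eq]; exact prod_mono hKsub subset_rfl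
    exact (hKcpt.prod isCompact_univ).image_of_continuousOn
      (t.toOpenPartialHomeomorph.continuousOn_symm.mono hsub)
  choose K hK1 hK2 using key
  obtain ⟨s, hs⟩ := isCompact_univ.elim_finite_subcover (fun x => interior (K x))
    (fun x => isOpen_interior) (fun x _ => mem_iUnion.mpr ⟨x, hK1 x⟩)
  constructor
  have huniv : (univ : Set E) = ⋃ x ∈ s, f ⁻¹' K x := by
    apply Set.eq_of_subset_of_subset
    · intro p _
      obtain ⟨x, hxs, hpx⟩ := mem_iUnion₂.mp (hs (mem_univ (f p)))
      exact mem_biUnion hxs (show f p ∈ K x from interior_subset hpx)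
    · exact subset_univ _
  rw [huniv]
  exact s.isCompact_biUnion fun x _ => hK2 x

end CoveringAux

section Chain

variable {V : Type*} [MetricSpace V] [CompactSpace V]

theorem chain_iter {g : V → V} {N : ℕ}
    {v : Fin (N + 1) → V} (hv : ∀ i : Fin N, g (v i.succ) = v i.castSucc)
    (k : ℕ) (hk : k ≤ N) : g^[k] (v (Fin.last N)) = v ⟨N - k, by omega⟩ := by
  induction k with
  | zero => rfl
  | succ n ih =>
    have hn : n ≤ N := by omega
    rw [Function.iterate_succ_apply', ih hn]
    have h := hv ⟨N - (n + 1), by omega⟩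
    have h1 : (⟨N - (n + 1), by omega⟩ : Fin N).succ = ⟨N - n, by omega⟩ := by
      ext; simp [Fin.succ]; omega
    have h2 : (⟨N - (n + 1), by omega⟩ : Fin N).castSucc = ⟨N - (n + 1), by omega⟩ := by
      ext; simp [Fin.castSucc, Fin.castAdd, Fin.castLE]
    rw [h1, h2] at h
    exact h

/-- The equivalence between the chain space `V(N,g)` and `V`, given by the last coordinate. -/
noncomputable def chainEquiv (g : V → V) (N : ℕ) :
    {v : Fin (N + 1) → V // ∀ i : Fin N, g (v i.succ) = v i.castSucc} ≃ V where
  toFun v := v.val (Fin.last N)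
  invFun w := ⟨fun i => g^[N - i] w, by
    intro i
    rw [← Function.iterate_succ_apply' g]
    congr 1
    have hi : (i.succ : ℕ) = i + 1 := rfl
    have hc : (i.castSucc : ℕ) = i := rfl
    rw [hi, hc]
    omega⟩
  left_inv v := by
    apply Subtype.ext
    funext i
    have := chain_iter v.2 (N - i) (by omega)
    have hval : (⟨N - (N - (i : ℕ)), by omega⟩ : Fin (N + 1)) = i := by
      ext
      simp only []
      omega
    rw [hval] at this
    exact this
  right_inv w := by
    show g^[N - (Fin.last N : ℕ)] w = w
    simp [Fin.last]

theorem chainEquiv_apply_zero (g : V → V) (N : ℕ)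
    (v : {v : Fin (N + 1) → V // ∀ i : Fin N, g (v i.succ) = v i.castSucc}) :
    v.val 0 = g^[N] (chainEquiv g N v) := by
  have := chain_iter v.2 N le_rfl
  have h0 : (⟨N - N, by omega⟩ : Fin (N + 1)) = 0 := by ext; simp
  rw [h0] at this
  exact this.symm

theorem chain_closed {g : V → V} (hg : Continuous g) (N : ℕ) :
    IsClosed {v : Fin (N + 1) → V | ∀ i : Fin N, g (v i.succ) = v i.castSucc} := by
  have : {v : Fin (N + 1) → V | ∀ i : Fin N, g (v i.succ) = v i.castSucc} =
      ⋂ i : Fin N, {v : Fin (N + 1) → V | g (v i.succ) = v i.castSucc} := by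
    ext v; simp [mem_iInter]
  rw [this]
  exact isClosed_iInter fun i =>
    isClosed_eq (hg.comp (continuous_apply _)) (continuous_apply _)

theorem iterate_isLocalHomeomorph {g : V → V} (hg : IsLocalHomeomorph g) (N : ℕ) :
    IsLocalHomeomorph (g^[N]) := by
  induction N with
  | zero => exact (Homeomorph.refl V).isLocalHomeomorph
  | succ n ih =>
    rw [Function.iterate_succ]
    exact ih.comp hg

end Chain

/-- `g` is a local homeomorphism iff each projection `π₀^N : V(N,g) → V` is a
finite-to-one covering map. -/
theorem stmt3 {V : Type*} [MetricSpace V] [CompactSpace V]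
    (g : V → V) (hsurj : Function.Surjective g) :
    IsLocalHomeomorph g ↔
      ∀ N : ℕ,
        IsCoveringMap
          (fun v : {v : Fin (N + 1) → V // ∀ i : Fin N, g (v i.succ) = v i.castSucc} =>
            v.val 0) ∧
        ∀ b : V,
          {v : {v : Fin (N + 1) → V // ∀ i : Fin N, g (v i.succ) = v i.castSucc} |
            v.val 0 = b}.Finite := by
  constructor
  · intro hg N
    haveI : CompactSpace {v : Fin (N + 1) → V // ∀ i : Fin N, g (v i.succ) = v i.castSucc} :=
      isCompact_iff_compactSpace.mp (chain_closed hg.continuous N).isCompact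
    set h : {v : Fin (N + 1) → V // ∀ i : Fin N, g (v i.succ) = v i.castSucc} ≃ₜ V :=
      { chainEquiv g N with
        continuous_toFun := (continuous_apply _).comp continuous_subtype_val
        continuous_invFun := Continuous.subtype_mk
          (continuous_pi fun i => (hg.continuous.iterate _)) _ }
    have hgiter : IsLocalHomeomorph (g^[N]) := iterate_isLocalHomeomorph hg N
    have hpeq : (fun v : {v : Fin (N + 1) → V // ∀ i : Fin N, g (v i.succ) = v i.castSucc} =>
        v.val 0) = (g^[N]) ∘ h := funext fun v => chainEquiv_apply_zero g N v
    have hploc : IsLocalHomeomorph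
        (fun v : {v : Fin (N + 1) → V // ∀ i : Fin N, g (v i.succ) = v i.castSucc} =>
          v.val 0) := by
      rw [hpeq]
      exact hgiter.comp h.isLocalHomeomorph
    have hpsurj : Function.Surjective
        (fun v : {v : Fin (N + 1) → V // ∀ i : Fin N, g (v i.succ) = v i.castSucc} =>
          v.val 0) := by
      rw [hpeq]
      exact (hsurj.iterate N).comp h.surjective
    refine ⟨isCoveringMap_of_isLocalHomeomorph hploc hpsurj, fun b => ?_⟩
    have hdisc := hploc.discrete_fiber b
    have hclosed : IsClosed ((fun v : {v : Fin (N + 1) → V //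
        ∀ i : Fin N, g (v i.succ) = v i.castSucc} => v.val 0) ⁻¹' {b}) :=
      isClosed_singleton.preimage hploc.continuous
    exact hclosed.isCompact.finite (isDiscrete_iff_discreteTopology.mpr hdisc)
  · intro h
    obtain ⟨hcov, hfin⟩ := h 1
    haveI : CompactSpace {v : Fin 2 → V // ∀ i : Fin 1, g (v i.succ) = v i.castSucc} :=
      compactSpace_of_isCoveringMap hcov hfin
    have hcont : Continuous (chainEquiv g 1) :=
      (continuous_apply _).comp continuous_subtype_val
    set h2 : {v : Fin 2 → V // ∀ i : Fin 1, g (v i.succ) = v i.castSucc} ≃ₜ V :=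
      hcont.homeoOfEquivCompactToT2
    have hgeq : g = (fun v : {v : Fin 2 → V // ∀ i : Fin 1, g (v i.succ) = v i.castSucc} =>
        v.val 0) ∘ h2.symm := by
      funext w
      have h1 : (h2.symm w).val 0 = g^[1] (chainEquiv g 1 (h2.symm w)) :=
        chainEquiv_apply_zero g 1 (h2.symm w)
      have h2w : chainEquiv g 1 (h2.symm w) = w := h2.apply_symm_apply w
      show g w = (h2.symm w).val 0
      rw [h1, h2w, Function.iterate_one]
    rw [hgeq]
    exact hcov.isLocalHomeomorph.comp h2.symm.isLocalHomeomorph
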